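/- Let q be a prime power and n ≥ 2 with gcd(n, q-1) = 1. Let P·A be the subgroup of GL_n(F_q) of all invertible matrices g with g_{n,i} = 0 for 1 ≤ i ≤ n-1, and for each prime ℓ dividing q - 1 let GL_n(F_q)^{ℓ^{v_ℓ(q-1)}} be the subgroup of matrices whose determinant is an ℓ^{v_ℓ(q-1)}-th power in F_q^×. Then the normal core in GL_n(F_q) of the intersection of P·A with all the subgroups GL_n(F_q)^{ℓ^{v_ℓ(q-1)}} (ℓ ranging over primes dividing q-1) is trivial; i.e., this collection of subgroups is faithful. -/

import Mathlib

open Matrix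

/-- The last index of `Fin n`. -/
def lastIdx (n : ℕ) (hn : 0 < n) : Fin n := ⟨n - 1, by omega⟩

/-- The subgroup `P·A` of `GL_n(F)` of invertible matrices whose last row
vanishes off the diagonal. -/
def PA (n : ℕ) (hn : 0 < n) (F : Type) [Field F] [DecidableEq F] :
    Subgroup (GL (Fin n) F) where
  carrier := {g | ∀ i : Fin n, i ≠ lastIdx n hn →
      (g : Matrix (Fin n) (Fin n) F) (lastIdx n hn) i = 0}
  one_mem' := by
    intro i hi
    exact Matrix.one_apply_ne (Ne.symm hi)
  mul_mem' := by
    intro g h hg hh i hi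
    have hval : ((g * h : GL (Fin n) F) : Matrix (Fin n) (Fin n) F)
        = (g : Matrix (Fin n) (Fin n) F) * (h : Matrix (Fin n) (Fin n) F) := rfl
    rw [Set.mem_setOf_eq] at *
    rw [hval, Matrix.mul_apply]
    refine Finset.sum_eq_zero fun k _ => ?_
    by_cases hk : k = lastIdx n hn
    · rw [hk, hh i hi, mul_zero]
    · rw [hg k hk, zero_mul]
  inv_mem' := by
    intro g hg
    rw [Set.mem_setOf_eq] at *
    have key : ∀ j : Fin n,
        (g : Matrix (Fin n) (Fin n) F) (lastIdx n hn) (lastIdx n hn) *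
          ((g⁻¹ : GL (Fin n) F) : Matrix (Fin n) (Fin n) F) (lastIdx n hn) j
        = (1 : Matrix (Fin n) (Fin n) F) (lastIdx n hn) j := by
      intro j
      have h1 : ((g : Matrix (Fin n) (Fin n) F) *
          ((g⁻¹ : GL (Fin n) F) : Matrix (Fin n) (Fin n) F))
          = (1 : Matrix (Fin n) (Fin n) F) := by
        have : ((g * g⁻¹ : GL (Fin n) F) : Matrix (Fin n) (Fin n) F)
            = (1 : Matrix (Fin n) (Fin n) F) := by rw [mul_inv_cancel]; rfl
        rw [← this]; rfl
      have h2 := congrFun (congrFun h1 (lastIdx n hn)) j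
      rw [Matrix.mul_apply] at h2
      rw [Finset.sum_eq_single (lastIdx n hn)
        (fun k _ hk => by rw [hg k hk, zero_mul])
        (by intro h; exact absurd (Finset.mem_univ _) h)] at h2
      exact h2
    have hLL : (g : Matrix (Fin n) (Fin n) F) (lastIdx n hn) (lastIdx n hn) ≠ 0 := by
      have := key (lastIdx n hn)
      rw [Matrix.one_apply_eq] at this
      exact left_ne_zero_of_mul_eq_one this
    intro i hi
    have := key i
    rw [Matrix.one_apply_ne (Ne.symm hi)] at this
    exact (mul_eq_zero.mp this).resolve_left hLL

/-- The subgroup `GL_n(F)^t` of invertible matrices whose determinant is a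
`t`-th power in `Fˣ`. -/
def GLpow (n : ℕ) (F : Type) [Field F] [DecidableEq F] (t : ℕ) :
    Subgroup (GL (Fin n) F) :=
  Subgroup.comap (Matrix.GeneralLinearGroup.det : GL (Fin n) F →* Fˣ)
    (powMonoidHom t : Fˣ →* Fˣ).range

theorem stmt_8 (q n : ℕ) (hq : IsPrimePow q) (hn : 2 ≤ n)
    (hgcd : Nat.gcd n (q - 1) = 1)
    (F : Type) [Field F] [Fintype F] [DecidableEq F] (hF : Fintype.card F = q) :
    (PA n (by omega) F ⊓
      ⨅ ℓ ∈ (q - 1).primeFactors, GLpow n F (ℓ ^ (q - 1).factorization ℓ)).normalCore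
    = ⊥ := by
  have hq2 : 2 ≤ q := hq.two_le
  rw [Subgroup.eq_bot_iff_forall]
  intro g hg
  have hn0 : 0 < n := by omega
  set L : Fin n := lastIdx n (by omega) with hL
  set M : Matrix (Fin n) (Fin n) F := (g : Matrix (Fin n) (Fin n) F) with hM
  have hconj : ∀ h : GL (Fin n) F, h * g * h⁻¹ ∈
      (PA n (by omega) F ⊓
        ⨅ ℓ ∈ (q - 1).primeFactors, GLpow n F (ℓ ^ (q - 1).factorization ℓ)).normalCore :=
    fun h => (Subgroup.normalCore_normal _).conj_mem g hg h
  have hPAmem : ∀ h : GL (Fin n) F, ∀ i : Fin n, i ≠ L →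
      ((h * g * h⁻¹ : GL (Fin n) F) : Matrix (Fin n) (Fin n) F) L i = 0 :=
    fun h i hi => (Subgroup.normalCore_le _ (hconj h)).1 i hi
  -- Step A : off-diagonal entries vanish
  have hdiag : ∀ i k : Fin n, k ≠ i → M i k = 0 := by
    intro i k hk
    by_cases hiL : i = L
    · subst hiL
      have := hPAmem 1 k hk
      simpa using this
    · set P : Matrix (Fin n) (Fin n) F := (Equiv.swap L i).toPEquiv.toMatrix with hP
      have P1 : P * P = 1 := by
        rw [hP, ← PEquiv.toMatrix_trans, ← Equiv.toPEquiv_trans]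
        simp
      set hU : GL (Fin n) F := ⟨P, P, P1, P1⟩ with hUdef
      have hkL : Equiv.swap L i k ≠ L := by
        intro hc
        apply hk
        have := congrArg (Equiv.swap L i) hc
        rw [Equiv.swap_apply_self, Equiv.swap_apply_left] at this
        exact this
      have h0 := hPAmem hU (Equiv.swap L i k) hkL
      have hval : ((hU * g * hU⁻¹ : GL (Fin n) F) : Matrix (Fin n) (Fin n) F)
          = P * M * P := rfl
      rw [hval] at h0
      rw [hP, PEquiv.mul_toMatrix_toPEquiv, PEquiv.toMatrix_toPEquiv_mul] at h0
      simpa using h0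
  -- Step B : diagonal entries are all equal
  have hdiagEq : ∀ i : Fin n, M i i = M L L := by
    intro i
    by_cases hiL : i = L
    · rw [hiL]
    · have hLi : L ≠ i := fun h => hiL h.symm
      set T : Matrix (Fin n) (Fin n) F := Matrix.transvection L i 1 with hT
      set T' : Matrix (Fin n) (Fin n) F := Matrix.transvection L i (-1) with hT'
      have hTT : T * T' = 1 := by
        rw [hT, hT', Matrix.transvection_mul_transvection_same _ _ hLi]
        simp
      have hTT' : T' * T = 1 := by
        rw [hT, hT', Matrix.transvection_mul_transvection_same _ _ hLi]
        simp
      set hU : GL (Fin n) F := ⟨T, T', hTT, hTT'⟩ with hUdef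
      have h0 := hPAmem hU i hiL
      have hval : ((hU * g * hU⁻¹ : GL (Fin n) F) : Matrix (Fin n) (Fin n) F)
          = T * M * T' := rfl
      rw [hval, hT, hT'] at h0
      rw [Matrix.mul_transvection_apply_same, Matrix.transvection_mul_apply_same,
        Matrix.transvection_mul_apply_same] at h0
      rw [hdiag L i hiL, hdiag i L hLi] at h0
      linear_combination h0
  -- M is scalar
  have hscal : M = M L L • (1 : Matrix (Fin n) (Fin n) F) := by
    ext a b
    by_cases hab : a = b
    · subst hab
      simp [Matrix.one_apply, hdiagEq a]
    · simp [Matrix.one_apply, hab, hdiag a b (fun h => hab h.symm)]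
  -- determinant
  have hdet : ((Matrix.GeneralLinearGroup.det g : Fˣ) : F) = M L L ^ n := by
    rw [Matrix.GeneralLinearGroup.val_det_apply, ← hM, hscal]
    simp [Matrix.det_smul]
  set d : Fˣ := Matrix.GeneralLinearGroup.det g with hd
  have hcard : Fintype.card Fˣ = q - 1 := by
    rw [Fintype.card_units, hF]
  have hq1 : q - 1 ≠ 0 := by omega
  -- d is a t-th power for every relevant t
  have hpow : ∀ ℓ ∈ (q - 1).primeFactors,
      ∃ μ : Fˣ, μ ^ (ℓ ^ (q - 1).factorization ℓ) = d := by
    intro ℓ hℓ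
    have h2 := (Subgroup.mem_inf.mp (Subgroup.normalCore_le _ hg)).2
    rw [Subgroup.mem_iInf] at h2
    have h3 := h2 ℓ
    rw [Subgroup.mem_iInf] at h3
    have h4 := h3 hℓ
    rw [GLpow, Subgroup.mem_comap, MonoidHom.mem_range] at h4
    obtain ⟨μ, hμ⟩ := h4
    exact ⟨μ, hμ⟩
  -- d = 1
  have hd1 : d = 1 := by
    by_contra hdne
    have hords : orderOf d ∣ q - 1 := by rw [← hcard]; exact orderOf_dvd_card
    obtain ⟨p, hp, hpd⟩ := Nat.exists_prime_and_dvd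
      (fun h1 => hdne (orderOf_eq_one_iff.mp h1))
    have hpq : p ∣ q - 1 := hpd.trans hords
    obtain ⟨μ, hμ⟩ := hpow p (Nat.mem_primeFactors.mpr ⟨hp, hpq, hq1⟩)
    have ht : p ^ (q - 1).factorization p ∣ q - 1 := Nat.ordProj_dvd _ _
    have hdp : d ^ ((q - 1) / p ^ (q - 1).factorization p) = 1 := by
      rw [← hμ, ← pow_mul, Nat.mul_div_cancel' ht, ← hcard, pow_card_eq_one]
    exact Nat.not_dvd_ordCompl hp hq1 (hpd.trans (orderOf_dvd_of_pow_eq_one hdp))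
  -- conclude lambda = 1
  have hln : M L L ^ n = 1 := by
    rw [← hdet, hd1, Units.val_one]
  have hl0 : M L L ≠ 0 := by
    intro h
    rw [h, zero_pow (by omega : n ≠ 0)] at hln
    exact zero_ne_one hln
  set lu : Fˣ := Units.mk0 (M L L) hl0 with hlu
  have hlun : lu ^ n = 1 := by
    ext
    simpa [hlu] using hln
  have hord1 : orderOf lu ∣ Nat.gcd n (q - 1) :=
    Nat.dvd_gcd (orderOf_dvd_of_pow_eq_one hlun) (by rw [← hcard]; exact orderOf_dvd_card)
  rw [hgcd, Nat.dvd_one] at hord1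
  have hlu1 : lu = 1 := orderOf_eq_one_iff.mp hord1
  have hMLL : M L L = 1 := by
    have h := congrArg Units.val hlu1
    rwa [hlu, Units.val_mk0, Units.val_one] at h
  have hM1 : M = 1 := by rw [hscal, hMLL, one_smul]
  exact Units.ext hM1
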